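/- Let d ≥ 1, let φ : ℝᵈ → ℝ be continuously differentiable, and let x ∈ ℝᵈ. Then the upwind gradient discretisation is consistent with the squared gradient norm: |D_h φ(y)|² → ‖∇φ(x)‖² as h → 0⁺ and y → x; that is, for all sequences hₙ → 0⁺ and yₙ → x one has |D_{hₙ} φ(yₙ)|² → ‖∇φ(x)‖². -/

import Mathlib

open scoped BigOperators
open MeasureTheory
open scoped Classical

noncomputable section

namespace Paper

/-- `ℝᵈ` with the Euclidean structure. -/
abbrev E (d : ℕ) := EuclideanSpace ℝ (Fin d)

/-- The standard basis vector `eᵢ` of `ℝᵈ`. -/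
def e (d : ℕ) (i : Fin d) : E d := EuclideanSpace.single i 1

/-- For a symmetric matrix, the maximum of the absolute values of its eigenvalues. -/
def specNorm {d : ℕ} (M : Matrix (Fin d) (Fin d) ℝ) : ℝ :=
  if h : M.IsHermitian then ⨆ i, |h.eigenvalues i| else 0

/-- `(λ,Λ)`-uniform ellipticity of `F : S(d) → ℝ`. -/
def UniformlyElliptic (d : ℕ) (lam Lam : ℝ) (F : Matrix (Fin d) (Fin d) ℝ → ℝ) : Prop :=
  ∀ M N : Matrix (Fin d) (Fin d) ℝ, M.IsHermitian → N.PosSemidef →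
    lam * specNorm N ≤ F M - F (M + N) ∧ F M - F (M + N) ≤ Lam * specNorm N

/-- The upwind discretisation `|D_h u (x)|²`. -/
def upwindSq (d : ℕ) (h : ℝ) (u : E d → ℝ) (x : E d) : ℝ :=
  (1 / h ^ 2) * ∑ i : Fin d,
    max (max (u x - u (x + h • e d i)) (u x - u (x - h • e d i))) 0 ^ 2

/-- The monotone discretisation `L_h^A u (x)` of `Tr (A D²u)`. -/
def Lh (d : ℕ) (h : ℝ) (A : Matrix (Fin d) (Fin d) ℝ) (u : E d → ℝ) (x : E d) : ℝ :=
  (∑ i : Fin d, (A i i - ∑ j ∈ Finset.univ.erase i, |A i j|) *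
      ((u (x + h • e d i) + u (x - h • e d i) - 2 * u x) / h ^ 2)) +
  ∑ i : Fin d, ∑ j ∈ Finset.univ.filter (fun j => i < j),
    (max (A i j) 0 *
        ((u (x + h • (e d i + e d j)) + u (x - h • (e d i + e d j)) - 2 * u x) / h ^ 2) +
      max (-A i j) 0 *
        ((u (x + h • (e d i - e d j)) + u (x - h • (e d i - e d j)) - 2 * u x) / h ^ 2))

/-- Diagonal dominance of a matrix. -/
def DiagDominant {d : ℕ} (A : Matrix (Fin d) (Fin d) ℝ) : Prop :=
  ∀ i, ∑ j ∈ Finset.univ.erase i, |A i j| ≤ A i i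

/-- Isaacs data with ellipticity constants `(λ, Λ)`: symmetric, diagonally dominant matrices
with `λ I ≤ A_{α,β} ≤ Λ I`. -/
def IsaacsData (d : ℕ) {ιA ιB : Type*} (lam Lam : ℝ)
    (A : ιA → ιB → Matrix (Fin d) (Fin d) ℝ) : Prop :=
  ∀ a b, (A a b).IsHermitian ∧ DiagDominant (A a b) ∧
    (A a b - lam • (1 : Matrix (Fin d) (Fin d) ℝ)).PosSemidef ∧
    (Lam • (1 : Matrix (Fin d) (Fin d) ℝ) - A a b).PosSemidef

/-- Discretised Isaacs operator. -/
def Fh (d : ℕ) {ιA ιB : Type*} (h : ℝ) (A : ιA → ιB → Matrix (Fin d) (Fin d) ℝ)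
    (u : E d → ℝ) (x : E d) : ℝ :=
  ⨆ a : ιA, ⨅ b : ιB, -(Lh d h (A a b) u x)

/-- A finite grid `Ω̄_h = Ω_h ∪ ∂Ω_h` whose interior points have all stencil points in the grid. -/
structure Grid (d : ℕ) (h : ℝ) where
  interior : Finset (E d)
  boundary : Finset (E d)
  disj : Disjoint interior boundary
  nonempty : (interior ∪ boundary).Nonempty
  stencil_ax : ∀ x ∈ interior, ∀ i : Fin d,
    x + h • e d i ∈ interior ∪ boundary ∧ x - h • e d i ∈ interior ∪ boundary
  stencil_diag : ∀ x ∈ interior, ∀ i j : Fin d, i < j →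
    x + h • (e d i + e d j) ∈ interior ∪ boundary ∧
    x - h • (e d i + e d j) ∈ interior ∪ boundary ∧
    x + h • (e d i - e d j) ∈ interior ∪ boundary ∧
    x - h • (e d i - e d j) ∈ interior ∪ boundary

/-- The finite difference scheme `G_h` for the regularised pure degenerate equation. -/
def scheme (d : ℕ) {ιA ιB : Type*} {h : ℝ} (ε θ : ℝ)
    (A : ιA → ιB → Matrix (Fin d) (Fin d) ℝ) (G : Grid d h)
    (f g : E d → ℝ) (u : E d → ℝ) (x : E d) : ℝ :=
  if x ∈ G.interior then
    ε * u x + Fh d h A u x - f x / (ε + upwindSq d h u x) ^ (θ / 2)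
  else u x - g x

/-- The finite difference scheme `G_h` for the regularised free transmission problem. -/
def schemeT (d : ℕ) {ιA ιB : Type*} {h : ℝ} (ε : ℝ) (θe : ℝ → ℝ)
    (A : ιA → ιB → Matrix (Fin d) (Fin d) ℝ) (G : Grid d h)
    (f g : E d → ℝ) (u : E d → ℝ) (x : E d) : ℝ :=
  if x ∈ G.interior then
    ε * u x + Fh d h A u x - f x / (ε + upwindSq d h u x) ^ (θe (u x) / 2)
  else u x - g x

/-- The properties of the regularised degeneracy exponent `θ_ε` used in the transmission scheme. -/
def ThetaInterp (ε θ₁ θ₂ : ℝ) (θe : ℝ → ℝ) : Prop :=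
  Monotone θe ∧ (∀ t, θ₁ ≤ θe t ∧ θe t ≤ θ₂) ∧
    (∀ t, t ≤ -ε → θe t = θ₁) ∧ (∀ t, ε ≤ t → θe t = θ₂)

/-- The Hessian matrix of `φ : ℝᵈ → ℝ` at `x`. -/
def hessianMatrix (d : ℕ) (φ : E d → ℝ) (x : E d) : Matrix (Fin d) (Fin d) ℝ :=
  Matrix.of fun i j => fderiv ℝ (fun y => fderiv ℝ φ y (e d j)) x (e d i)

/-- The piecewise-linear interpolation `Θ_ε` between the degeneracy rates `θ₁` and `θ₂`. -/
def ThetaStep (θ₁ θ₂ ε t : ℝ) : ℝ :=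
  if t ≤ -ε then θ₁
  else if t < ε then (θ₂ - θ₁) / (2 * ε) * t + (θ₁ + θ₂) / 2
  else θ₂

lemma diff_quot_tendsto {d : ℕ} (φ : E d → ℝ) (hφ : ContDiff ℝ 1 φ) (x : E d) (v : E d)
    (hs : ℕ → ℝ) (ys : ℕ → E d) (hpos : ∀ n, 0 < hs n)
    (hh : Filter.Tendsto hs Filter.atTop (nhds 0))
    (hy : Filter.Tendsto ys Filter.atTop (nhds x)) :
    Filter.Tendsto (fun n => (φ (ys n + hs n • v) - φ (ys n)) / hs n) Filter.atTop
      (nhds (fderiv ℝ φ x v)) := by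
  have hstrict : HasStrictFDerivAt φ (fderiv ℝ φ x) x :=
    hφ.contDiffAt.hasStrictFDerivAt one_ne_zero
  have hsv : Filter.Tendsto (fun n => hs n • v) Filter.atTop (nhds (0 : E d)) := by
    simpa using hh.smul_const v
  have hp : Filter.Tendsto (fun n => (ys n + hs n • v, ys n)) Filter.atTop (nhds (x, x)) := by
    refine Filter.Tendsto.prodMk_nhds ?_ hy
    simpa using hy.add hsv
  have ho := hstrict.isLittleO.comp_tendsto hp
  have hBO : (fun n => (ys n + hs n • v) - ys n) =O[Filter.atTop] hs := by
    refine Asymptotics.isBigO_of_le' (c := ‖v‖) _ (fun n => ?_)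
    simp [norm_smul, mul_comm]
  have h3 := (ho.trans_isBigO hBO).tendsto_div_nhds_zero
  have key : (fun n => (φ (ys n + hs n • v) - φ (ys n)) / hs n)
      = fun n => (φ (ys n + hs n • v) - φ (ys n)
          - fderiv ℝ φ x ((ys n + hs n • v) - ys n)) / hs n + fderiv ℝ φ x v := by
    funext n
    have h0 : hs n ≠ 0 := (hpos n).ne'
    rw [add_sub_cancel_left, (fderiv ℝ φ x).map_smul, smul_eq_mul]
    field_simp
    ring
  rw [key]
  simpa using h3.add tendsto_const_nhds

/-- Consistency of the upwind gradient discretisation: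
for `φ` continuously differentiable, `|D_{hₙ} φ(yₙ)|² → ‖∇φ(x)‖²` whenever
`hₙ → 0⁺` and `yₙ → x`. -/
theorem upwind_consistent {d : ℕ} (hd : 1 ≤ d)
    (φ : E d → ℝ) (hφ : ContDiff ℝ 1 φ) (x : E d)
    (hs : ℕ → ℝ) (ys : ℕ → E d)
    (hpos : ∀ n, 0 < hs n)
    (hh : Filter.Tendsto hs Filter.atTop (nhds 0))
    (hy : Filter.Tendsto ys Filter.atTop (nhds x)) :
    Filter.Tendsto (fun n => upwindSq d (hs n) φ (ys n)) Filter.atTop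
      (nhds (‖gradient φ x‖ ^ 2)) := by
  have hgrad : ∀ i, gradient φ x i = fderiv ℝ φ x (e d i) := by
    intro i
    have h1 : (inner ℝ (gradient φ x) (e d i) : ℝ) = fderiv ℝ φ x (e d i) :=
      InnerProductSpace.toDual_symm_apply
    have h2 : (inner ℝ (gradient φ x) (e d i) : ℝ) = gradient φ x i := by
      simp only [e, EuclideanSpace.inner_single_right]
      simp
    rw [← h1, h2]
  set g : Fin d → ℝ := fun i => fderiv ℝ φ x (e d i) with hg
  have hnorm : ‖gradient φ x‖ ^ 2 = ∑ i, g i ^ 2 := by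
    rw [← real_inner_self_eq_norm_sq]
    simp only [PiLp.inner_apply, RCLike.inner_apply, starRingEnd_apply, star_trivial]
    exact Finset.sum_congr rfl fun i _ => by rw [hgrad i, sq]
  rw [hnorm]
  have hrw : ∀ n, upwindSq d (hs n) φ (ys n) = ∑ i : Fin d,
      (max (max ((φ (ys n) - φ (ys n + hs n • e d i)) / hs n)
        ((φ (ys n) - φ (ys n - hs n • e d i)) / hs n)) 0) ^ 2 := by
    intro n
    have h0 : hs n ≠ 0 := (hpos n).ne'
    unfold upwindSq
    rw [Finset.mul_sum]
    refine Finset.sum_congr rfl fun i _ => ?_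
    rw [max_div_div_right (hpos n).le, show (0:ℝ) = 0 / hs n by simp,
      max_div_div_right (hpos n).le, div_pow]
    field_simp
    rw [zero_div]
  simp only [hrw]
  refine tendsto_finset_sum _ fun i _ => ?_
  have hA : Filter.Tendsto (fun n => (φ (ys n) - φ (ys n + hs n • e d i)) / hs n)
      Filter.atTop (nhds (-(g i))) := by
    have h := (diff_quot_tendsto φ hφ x (e d i) hs ys hpos hh hy).neg
    simp only [← neg_div, neg_sub] at h
    simpa [hg] using h
  have hB : Filter.Tendsto (fun n => (φ (ys n) - φ (ys n - hs n • e d i)) / hs n)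
      Filter.atTop (nhds (g i)) := by
    have h := (diff_quot_tendsto φ hφ x (-(e d i)) hs ys hpos hh hy).neg
    simp only [← neg_div, neg_sub, map_neg, neg_neg] at h
    simpa [hg, smul_neg, ← sub_eq_add_neg] using h
  have hmax : Filter.Tendsto (fun n => max (max ((φ (ys n) - φ (ys n + hs n • e d i)) / hs n)
      ((φ (ys n) - φ (ys n - hs n • e d i)) / hs n)) 0) Filter.atTop
      (nhds (max (max (-(g i)) (g i)) 0)) :=
    (hA.max hB).max tendsto_const_nhds
  have habs : max (max (-(g i)) (g i)) 0 = |g i| := by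
    rw [max_comm (-(g i)) (g i), ← abs_eq_max_neg, max_eq_left (abs_nonneg _)]
  rw [habs] at hmax
  simpa [sq_abs] using hmax.pow 2

end Paper
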